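/- For every real number x, sin(πx) = πx · Σ_{n=0}^{∞} (-1)^n · S_n · x^{2n}, where S_0 = 1 and for n ≥ 1, S_n is the sum over all strictly increasing n-tuples of positive integers 1 ≤ ℓ_1 < ℓ_2 < ... < ℓ_n of ∏_{i=1}^{n} 1/ℓ_i². In particular, for x ≠ 0, sin(πx)/(πx) = Σ_{n=0}^{∞} (-1)^n · S_n · x^{2n}. -/

import Mathlib

open Real Filter Finset

/-- `S n`: the sum over all strictly increasing `n`-tuples of positive integers
`ℓ 0 < ℓ 1 < ⋯ < ℓ (n-1)` of `∏ i, 1/(ℓ i)²` (the multiple zeta value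
`ζ(2,...,2)` with `n` twos). For `n = 0` the index type has a single element
(the empty tuple) with empty product `1`, so `S 0 = 1`. -/
noncomputable def S (n : ℕ) : ℝ :=
  ∑' ℓ : {f : Fin n → ℕ+ // StrictMono f}, ∏ i : Fin n, 1 / ((ℓ.1 i : ℕ) : ℝ) ^ 2

/-- The map sending a strictly increasing tuple of positive integers to the finset of
(predecessors of) its values. -/
noncomputable def Phi : (Σ n : ℕ, {f : Fin n → ℕ+ // StrictMono f}) → Finset ℕ :=
  fun p => Finset.univ.image (fun i => (p.2.1 i : ℕ) - 1)

lemma phi_inj_aux {n : ℕ} (f : {f : Fin n → ℕ+ // StrictMono f}) :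
    Function.Injective (fun i : Fin n => (f.1 i : ℕ) - 1) := by
  intro i j h
  simp only at h
  have h1 : (f.1 i : ℕ) = (f.1 j : ℕ) := by
    have hi : 0 < (f.1 i : ℕ) := (f.1 i).pos
    have hj : 0 < (f.1 j : ℕ) := (f.1 j).pos
    omega
  exact f.2.injective (PNat.coe_injective h1)

lemma phi_card {n : ℕ} (f : {f : Fin n → ℕ+ // StrictMono f}) :
    (Phi ⟨n, f⟩).card = n := by
  rw [Phi, Finset.card_image_of_injective _ (phi_inj_aux f), Finset.card_univ, Fintype.card_fin]

lemma phi_injective : Function.Injective Phi := by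
  rintro ⟨n, f⟩ ⟨m, g⟩ h
  have hnm : n = m := by rw [← phi_card f, ← phi_card g, h]
  subst hnm
  -- show f = g
  have himg : Finset.univ.image (fun i : Fin n => ((f.1 i : ℕ) - 1) + 1)
      = Finset.univ.image (fun i : Fin n => ((g.1 i : ℕ) - 1) + 1) := by
    have := congrArg (Finset.image (· + 1)) h
    simpa [Phi, Finset.image_image, Function.comp_def] using this
  have hf1 : ∀ i, ((f.1 i : ℕ) - 1) + 1 = (f.1 i : ℕ) := fun i => by
    have : 0 < (f.1 i : ℕ) := (f.1 i).pos; omega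
  have hg1 : ∀ i, ((g.1 i : ℕ) - 1) + 1 = (g.1 i : ℕ) := fun i => by
    have : 0 < (g.1 i : ℕ) := (g.1 i).pos; omega
  simp only [funext hf1, funext hg1] at himg
  -- both coe∘f and coe∘g are strict mono with same image
  set T : Finset ℕ := Finset.univ.image (fun i : Fin n => (f.1 i : ℕ)) with hT
  have hcard : T.card = n := by
    rw [hT, Finset.card_image_of_injective _
      (fun i j hij => f.2.injective (PNat.coe_injective hij)), Finset.card_univ,
      Fintype.card_fin]
  have hfmono : StrictMono (fun i : Fin n => (f.1 i : ℕ)) := fun i j hij => by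
    exact_mod_cast f.2 hij
  have hgmono : StrictMono (fun i : Fin n => (g.1 i : ℕ)) := fun i j hij => by
    exact_mod_cast g.2 hij
  have hfe := Finset.orderEmbOfFin_unique hcard
    (f := fun i : Fin n => (f.1 i : ℕ))
    (fun i => by rw [hT]; exact Finset.mem_image_of_mem _ (Finset.mem_univ i)) hfmono
  have hge := Finset.orderEmbOfFin_unique hcard
    (f := fun i : Fin n => (g.1 i : ℕ))
    (fun i => by rw [himg]; exact Finset.mem_image_of_mem _ (Finset.mem_univ i)) hgmono
  have : (fun i : Fin n => (f.1 i : ℕ)) = fun i : Fin n => (g.1 i : ℕ) := by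
    rw [hfe, hge]
  ext1
  · rfl
  · refine heq_of_eq (Subtype.ext (funext fun i => ?_))
    exact PNat.coe_injective (congrFun this i)

lemma phi_surjective : Function.Surjective Phi := by
  intro T
  set n := T.card with hn
  have hmono : StrictMono (fun i : Fin n => (T.orderEmbOfFin hn.symm i).succPNat) := by
    intro i j hij
    exact Nat.succPNat_lt_succPNat.mpr ((T.orderEmbOfFin hn.symm).strictMono hij)
  refine ⟨⟨n, ⟨fun i => (T.orderEmbOfFin hn.symm i).succPNat, hmono⟩⟩, ?_⟩
  have hcoe : ∀ i : Fin n, ((T.orderEmbOfFin hn.symm i).succPNat : ℕ) - 1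
      = T.orderEmbOfFin hn.symm i := fun i => by
    rw [Nat.succPNat_coe, Nat.succ_sub_one]
  simp only [Phi, hcoe]
  apply Finset.coe_injective
  rw [Finset.coe_image, Finset.coe_univ, Set.image_univ, Finset.range_orderEmbOfFin]

noncomputable def E : (Σ n : ℕ, {f : Fin n → ℕ+ // StrictMono f}) ≃ Finset ℕ :=
  Equiv.ofBijective Phi ⟨phi_injective, phi_surjective⟩

theorem stmt_15 (x : ℝ) :
    Summable (fun n : ℕ => (-1) ^ n * S n * x ^ (2 * n)) ∧
      Real.sin (π * x) = π * x * ∑' n : ℕ, (-1) ^ n * S n * x ^ (2 * n) ∧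
      (x ≠ 0 →
        Real.sin (π * x) / (π * x) = ∑' n : ℕ, (-1) ^ n * S n * x ^ (2 * n)) := by
  rcases eq_or_ne x 0 with rfl | hx
  · have hsum : Summable (fun n : ℕ => (-1) ^ n * S n * (0:ℝ) ^ (2 * n)) := by
      apply summable_of_finite_support
      apply Set.Finite.subset (Set.finite_singleton 0)
      intro n hn
      simp only [Function.mem_support] at hn
      by_contra hne
      exact hn (by simp [zero_pow, Nat.mul_ne_zero two_ne_zero hne])
    exact ⟨hsum, by simp, fun h => absurd rfl h⟩
  -- main case
  set F : Finset ℕ → ℝ := fun T => ∏ j ∈ T, (-(x ^ 2) / ((j : ℝ) + 1) ^ 2) with hF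
  have ha_pos : ∀ j : ℕ, (0:ℝ) < ((j : ℝ) + 1) ^ 2 := fun j => by positivity
  -- summability of |F|
  have habs : ∀ T : Finset ℕ, |F T| = ∏ j ∈ T, (x ^ 2 / ((j : ℝ) + 1) ^ 2) := by
    intro T
    rw [hF, Finset.abs_prod]
    refine Finset.prod_congr rfl fun j _ => ?_
    rw [abs_div, abs_neg, abs_of_nonneg (sq_nonneg x), abs_of_pos (ha_pos j)]
  have hsummable_a : Summable (fun j : ℕ => x ^ 2 / ((j : ℝ) + 1) ^ 2) := by
    apply Summable.mul_left
    have : Summable (fun j : ℕ => 1 / ((j : ℝ)) ^ 2) := by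
      exact summable_one_div_nat_pow.mpr one_lt_two
    have h2 := (summable_nat_add_iff 1).mpr this
    refine h2.congr fun j => ?_
    push_cast
    rw [one_div]
  set c : ℝ := ∑' j : ℕ, x ^ 2 / ((j : ℝ) + 1) ^ 2 with hc
  have hsumF : Summable (fun T : Finset ℕ => |F T|) := by
    apply summable_of_sum_le (c := Real.exp c)
    · intro T
      exact abs_nonneg _
    · intro u
      -- u is a finite set of finsets; all contained in powerset (range N)
      set N := (u.sup fun T => T.sup id) + 1 with hN
      have hsub : u ⊆ (Finset.range N).powerset := by
        intro T hT
        rw [Finset.mem_powerset]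
        intro j hj
        rw [Finset.mem_range, hN]
        have h1 : j ≤ T.sup id := Finset.le_sup (f := id) hj
        have h2 : T.sup id ≤ u.sup fun T => T.sup id := Finset.le_sup (f := fun T => T.sup id) hT
        omega
      calc ∑ T ∈ u, |F T| ≤ ∑ T ∈ (Finset.range N).powerset, |F T| := by
            apply Finset.sum_le_sum_of_subset_of_nonneg hsub
            intro T _ _
            rw [habs]; positivity
        _ = ∑ T ∈ (Finset.range N).powerset,
              (∏ j ∈ T, (x ^ 2 / ((j : ℝ) + 1) ^ 2)) * ∏ j ∈ Finset.range N \ T, (1:ℝ) := by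
            refine Finset.sum_congr rfl fun T _ => ?_
            rw [habs, Finset.prod_const_one, mul_one]
        _ = ∏ j ∈ Finset.range N, (x ^ 2 / ((j : ℝ) + 1) ^ 2 + 1) :=
            (Finset.prod_add _ _ _).symm
        _ ≤ ∏ j ∈ Finset.range N, Real.exp (x ^ 2 / ((j : ℝ) + 1) ^ 2) := by
            apply Finset.prod_le_prod
            · intro j _; positivity
            · intro j _; exact Real.add_one_le_exp _
        _ = Real.exp (∑ j ∈ Finset.range N, x ^ 2 / ((j : ℝ) + 1) ^ 2) := by
            rw [Real.exp_sum]
        _ ≤ Real.exp c := by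
            apply Real.exp_le_exp.mpr
            exact Summable.sum_le_tsum _ (fun j _ => by positivity) hsummable_a
  have hFsummable : Summable F := hsumF.of_abs
  set A := ∑' T : Finset ℕ, F T with hA
  have hFhasSum : HasSum F A := hFsummable.hasSum
  -- Step C: sin(πx) = πx * A via Euler's product
  have htendN : Filter.Tendsto (fun N : ℕ => (Finset.range N).powerset) Filter.atTop
      Filter.atTop := by
    apply Filter.tendsto_atTop_atTop_of_monotone
    · intro m n hmn
      exact Finset.powerset_mono.mpr (Finset.range_subset_range.mpr hmn)
    · intro b
      refine ⟨(b.sup fun T => T.sup id) + 1, ?_⟩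
      intro T hT
      rw [Finset.mem_powerset]
      intro j hj
      rw [Finset.mem_range]
      have h1 : j ≤ T.sup id := Finset.le_sup (f := id) hj
      have h2 : T.sup id ≤ b.sup fun T => T.sup id := Finset.le_sup (f := fun T => T.sup id) hT
      omega
  have hprodTendsto : Filter.Tendsto (fun N : ℕ => ∑ T ∈ (Finset.range N).powerset, F T)
      Filter.atTop (nhds A) := hFhasSum.comp htendN
  have hprod_eq : ∀ N : ℕ, ∑ T ∈ (Finset.range N).powerset, F T
      = ∏ j ∈ Finset.range N, (1 - x ^ 2 / ((j : ℝ) + 1) ^ 2) := by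
    intro N
    have h := Finset.prod_add (fun j : ℕ => -(x ^ 2) / ((j : ℝ) + 1) ^ 2) (fun _ => (1 : ℝ))
      (Finset.range N)
    simp only [Finset.prod_const_one, mul_one] at h
    simp only [hF]
    rw [← h]
    exact Finset.prod_congr rfl fun j _ => by ring
  have hsin : Real.sin (π * x) = π * x * A := by
    have h1 := Real.tendsto_euler_sin_prod x
    have h2 : Filter.Tendsto (fun N : ℕ => π * x * ∑ T ∈ (Finset.range N).powerset, F T)
        Filter.atTop (nhds (π * x * A)) := hprodTendsto.const_mul _
    have h2' := h2.congr (fun N => by rw [hprod_eq N])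
    exact tendsto_nhds_unique h1 h2'
  -- Step D: regroup by cardinality through the equivalence E
  have hFE : HasSum (F ∘ E) A := (Equiv.hasSum_iff E).mpr hFhasSum
  have hcomp : ∀ (n : ℕ) (ℓ : {f : Fin n → ℕ+ // StrictMono f}),
      (F ∘ E) ⟨n, ℓ⟩ = ((-1) ^ n * x ^ (2 * n)) * ∏ i : Fin n, 1 / ((ℓ.1 i : ℕ) : ℝ) ^ 2 := by
    intro n ℓ
    show F (Phi ⟨n, ℓ⟩) = _
    have hshow : F (Phi ⟨n, ℓ⟩) = ∏ j ∈ Finset.univ.image (fun i : Fin n => (ℓ.1 i : ℕ) - 1),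
        (-(x ^ 2) / ((j : ℝ) + 1) ^ 2) := rfl
    rw [hshow, Finset.prod_image (fun i _ j _ hij => phi_inj_aux ℓ hij)]
    have key : ∀ i : Fin n, ((((ℓ.1 i : ℕ) - 1 : ℕ) : ℝ) + 1) = ((ℓ.1 i : ℕ) : ℝ) := by
      intro i
      have h1 : 1 ≤ (ℓ.1 i : ℕ) := (ℓ.1 i).pos
      rw [Nat.cast_sub h1, Nat.cast_one]
      ring
    simp only [key]
    have hfac : ∀ i : Fin n, -(x ^ 2) / (((ℓ.1 i : ℕ) : ℝ)) ^ 2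
        = ((-1) * x ^ 2) * (1 / ((ℓ.1 i : ℕ) : ℝ) ^ 2) := fun i => by ring
    simp only [hfac]
    rw [Finset.prod_mul_distrib, Finset.prod_const, Finset.card_univ, Fintype.card_fin,
      mul_pow, ← pow_mul]
  have hfib : ∀ n : ℕ, HasSum (fun ℓ : {f : Fin n → ℕ+ // StrictMono f} =>
      (F ∘ E) ⟨n, ℓ⟩) ((-1) ^ n * S n * x ^ (2 * n)) := by
    intro n
    have hsum1 : Summable (fun ℓ : {f : Fin n → ℕ+ // StrictMono f} => (F ∘ E) ⟨n, ℓ⟩) :=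
      hFE.summable.sigma_factor n
    have hsum2 : Summable (fun ℓ : {f : Fin n → ℕ+ // StrictMono f} =>
        ((-1 : ℝ) ^ n * x ^ (2 * n)) * ∏ i : Fin n, 1 / ((ℓ.1 i : ℕ) : ℝ) ^ 2) :=
      hsum1.congr (fun ℓ => hcomp n ℓ)
    have hconst : ((-1 : ℝ) ^ n * x ^ (2 * n)) ≠ 0 :=
      mul_ne_zero (pow_ne_zero _ (by norm_num)) (pow_ne_zero _ hx)
    have hsum3 : Summable (fun ℓ : {f : Fin n → ℕ+ // StrictMono f} =>
        ∏ i : Fin n, 1 / ((ℓ.1 i : ℕ) : ℝ) ^ 2) := by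
      have h := hsum2.mul_left (((-1 : ℝ) ^ n * x ^ (2 * n))⁻¹)
      refine h.congr fun ℓ => ?_
      rw [← mul_assoc, inv_mul_cancel₀ hconst, one_mul]
    have hS : HasSum (fun ℓ : {f : Fin n → ℕ+ // StrictMono f} =>
        ∏ i : Fin n, 1 / ((ℓ.1 i : ℕ) : ℝ) ^ 2) (S n) := by
      simp only [S]
      exact hsum3.hasSum
    have h := hS.mul_left ((-1 : ℝ) ^ n * x ^ (2 * n))
    have hfun : (fun ℓ : {f : Fin n → ℕ+ // StrictMono f} => (F ∘ E) ⟨n, ℓ⟩)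
        = fun ℓ => ((-1 : ℝ) ^ n * x ^ (2 * n)) * ∏ i : Fin n, 1 / ((ℓ.1 i : ℕ) : ℝ) ^ 2 :=
      funext (hcomp n)
    rw [hfun, show (-1 : ℝ) ^ n * S n * x ^ (2 * n)
      = ((-1 : ℝ) ^ n * x ^ (2 * n)) * S n by ring]
    exact h
  have hg : HasSum (fun n : ℕ => (-1) ^ n * S n * x ^ (2 * n)) A := hFE.sigma hfib
  refine ⟨hg.summable, ?_, ?_⟩
  · rw [hg.tsum_eq, hsin]
  · intro _
    rw [hg.tsum_eq, hsin]
    exact mul_div_cancel_left₀ A (mul_ne_zero Real.pi_ne_zero hx)
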